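/- Let m ≥ 3 be an integer such that the regular m-gon is constructible by compass and straightedge, i.e., φ(m) is a power of 2. Let δ be a divisor of λ(m) with δ > 2, where λ is the Carmichael function. Then the sum over all units a of ℤ/mℤ whose multiplicative order equals δ is congruent to 0 modulo m. -/

import Mathlib

open Finset

/-- The Carmichael function `λ(m)`: the exponent of the group of units of `ℤ/mℤ`. -/
noncomputable def carmichael (m : ℕ) : ℕ := Monoid.exponent (ZMod m)ˣ

open scoped Classical in
/-- If the regular `m`-gon is constructible by compass and straightedge (for `m ≥ 3`, this means
`φ(m)` is a power of `2`) and `δ` is a divisor of `λ(m)` with `δ > 2`, then the sum of all units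
of `ℤ/mℤ` of multiplicative order `δ` is `0` in `ZMod m`. -/
theorem sum_units_orderOf_constructible (m δ : ℕ) (hm : 3 ≤ m)
    (hconstr : ∃ k : ℕ, Nat.totient m = 2 ^ k)
    (hδ : δ ∣ carmichael m) (hδ2 : 2 < δ) :
    haveI : NeZero m := ⟨by omega⟩
    ∑ a ∈ univ.filter (fun a : (ZMod m)ˣ => orderOf a = δ), (a : ZMod m) = 0 := by
  haveI : NeZero m := ⟨by omega⟩
  obtain ⟨k, hk⟩ := hconstr
  -- δ is a power of 2
  have hexp : carmichael m ∣ 2 ^ k := by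
    have h1 : carmichael m ∣ Nat.card (ZMod m)ˣ := Group.exponent_dvd_nat_card
    rwa [Nat.card_eq_fintype_card, ZMod.card_units_eq_totient, hk] at h1
  obtain ⟨t, hts, rfl⟩ := (Nat.dvd_prime_pow Nat.prime_two).mp (hδ.trans hexp)
  have ht2 : 2 ≤ t := by
    by_contra h
    interval_cases t <;> omega
  have heven : Even (2 ^ (t - 1)) := by
    refine (Nat.even_pow).mpr ⟨even_two, by omega⟩
  -- order of -a equals order of a
  have key : ∀ a : (ZMod m)ˣ, orderOf a = 2 ^ t → orderOf (-a) = 2 ^ t := by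
    intro a ha
    have hpow : (-a) ^ (2 ^ (t - 1)) = a ^ (2 ^ (t - 1)) := heven.neg_pow a
    have h1 : (-a) ^ (2 ^ t) = 1 := by
      have he : Even (2 ^ t) := (Nat.even_pow).mpr ⟨even_two, by omega⟩
      rw [he.neg_pow, ← ha, pow_orderOf_eq_one]
    obtain ⟨s, hs, hds⟩ :=
      (Nat.dvd_prime_pow Nat.prime_two).mp (orderOf_dvd_of_pow_eq_one h1)
    rcases eq_or_lt_of_le hs with h | h
    · rw [hds, h]
    · exfalso
      have hd1 : orderOf (-a) ∣ 2 ^ (t - 1) := by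
        rw [hds]; exact pow_dvd_pow 2 (by omega)
      have h2 : a ^ (2 ^ (t - 1)) = 1 := by
        rw [← hpow]; exact orderOf_dvd_iff_pow_eq_one.mp hd1
      have h3 : (2 : ℕ) ^ t ∣ 2 ^ (t - 1) := ha ▸ orderOf_dvd_of_pow_eq_one h2
      have := Nat.le_of_dvd (Nat.pow_pos (by norm_num)) h3
      have := Nat.pow_lt_pow_right (a := 2) one_lt_two (show t - 1 < t by omega)
      omega
  -- -a ≠ a
  have hne : ∀ a : (ZMod m)ˣ, -a ≠ a := by
    intro a h
    have h2 : (-(a : ZMod m)) = (a : ZMod m) := by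
      rw [← Units.val_neg, h]
    have h3 : (2 : ZMod m) * (a : ZMod m) = 0 := by
      have : (a : ZMod m) + (a : ZMod m) = 0 := by
        nth_rewrite 1 [← h2]; ring
      rw [two_mul, this]
    have h4 : (2 : ZMod m) = 0 := by
      have := congrArg (· * ((a⁻¹ : (ZMod m)ˣ) : ZMod m)) h3
      simpa [mul_assoc] using this
    have h5 : ((2 : ℕ) : ZMod m) = 0 := by exact_mod_cast h4
    have := (ZMod.natCast_eq_zero_iff 2 m).mp h5
    have := Nat.le_of_dvd (by norm_num) this
    omega
  refine Finset.sum_involution (fun a _ => -a) ?_ ?_ ?_ ?_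
  · intro a _
    show (a : ZMod m) + ((-a : (ZMod m)ˣ) : ZMod m) = 0
    rw [Units.val_neg]
    exact add_neg_cancel _
  · intro a _ _
    exact hne a
  · intro a ha
    simp only [Finset.mem_filter, Finset.mem_univ, true_and] at ha ⊢
    exact key a ha
  · intro a _
    exact neg_neg a
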